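/- Under the hypotheses of the reverse direction of the main theorem, the map f : M → M' defined by f(α + ω) = g(α) + h(ω) satisfies f(t·x + (1−st)·y) = t·f(x) + (1−st)·f(y) for all x, y ∈ M, and hence (together with f(0)=0 and f(s·x)=s·f(x)) f is an isomorphism of Alexander biquandles. -/

import Mathlib

noncomputable section

/-- The Laurent polynomial ring `ℤ[s^{±1}, t^{±1}]` in two variables,
realized as the group algebra of `ℤ × ℤ` over `ℤ`. -/
abbrev L : Type := AddMonoidAlgebra ℤ (ℤ × ℤ)

/-- The variable `s`. -/
def sL : L := AddMonoidAlgebra.single (1, 0) 1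
/-- The variable `t`. -/
def tL : L := AddMonoidAlgebra.single (0, 1) 1
/-- The inverse `s⁻¹`. -/
def sLi : L := AddMonoidAlgebra.single (-1, 0) 1
/-- The inverse `t⁻¹`. -/
def tLi : L := AddMonoidAlgebra.single (0, -1) 1

/-- `s` as a unit of `L`. -/
def sU : Lˣ where
  val := sL
  inv := sLi
  val_inv := by
    simp [sL, sLi, AddMonoidAlgebra.single_mul_single, AddMonoidAlgebra.one_def, Prod.ext_iff, Prod.mk_zero_zero]
  inv_val := by
    simp [sL, sLi, AddMonoidAlgebra.single_mul_single, AddMonoidAlgebra.one_def, Prod.ext_iff, Prod.mk_zero_zero]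

/-- The submodule `(1-st)M`. -/
def Dsub (M : Type) [AddCommGroup M] [Module L M] : Submodule L M :=
  LinearMap.range (LinearMap.lsmul L M (1 - sL * tL))

/-- The `s`-orbit `O_s(X)` of a subset `X ⊆ M`. -/
def Os {M : Type} [AddCommGroup M] [Module L M] (X : Set M) : Set M :=
  { y | ∃ (n : ℤ) (x : M), x ∈ X ∧ y = ((sU ^ n : Lˣ) : L) • x }

/-- `A` is a set of coset representatives for `M/(1-st)M`. -/
def IsCR (M : Type) [AddCommGroup M] [Module L M] (A : Set M) : Prop :=
  ∀ x : M, ∃! a, a ∈ A ∧ x - a ∈ Dsub M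

/-- `f` preserves the four Alexander biquandle operations. -/
def IsBqHom {M M' : Type} [AddCommGroup M] [Module L M] [AddCommGroup M'] [Module L M']
    (f : M → M') : Prop :=
  (∀ x y : M, f (tL • x + (1 - sL * tL) • y) = tL • f x + (1 - sL * tL) • f y) ∧
  (∀ x : M, f (sL • x) = sL • f x) ∧
  (∀ x y : M, f (tLi • x + (1 - sLi * tLi) • y) = tLi • f x + (1 - sLi * tLi) • f y) ∧
  (∀ x : M, f (sLi • x) = sLi • f x)

lemma hsis : sLi * sL = 1 := sU.inv_val
lemma hssi : sL * sLi = 1 := sU.val_inv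
lemma htit : tLi * tL = 1 := by
  simp [tL, tLi, AddMonoidAlgebra.single_mul_single, AddMonoidAlgebra.one_def, Prod.ext_iff, Prod.mk_zero_zero]
lemma eT : sLi - sLi * (1 - sL * tL) = tL := by
  have e : sLi - sLi * (1 - sL * tL) = (sLi * sL) * tL := by ring
  rw [e, hsis, one_mul]
lemma eTi : sL - sL * (1 - sLi * tLi) = tLi := by
  have e : sL - sL * (1 - sLi * tLi) = (sL * sLi) * tLi := by ring
  rw [e, hssi, one_mul]
lemma eDi : 1 - sLi * tLi = (-(sLi * tLi)) * (1 - sL * tL) := by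
  have e : (-(sLi * tLi)) * (1 - sL * tL) = (sLi * sL) * (tLi * tL) - sLi * tLi := by ring
  rw [e, hsis, htit, one_mul]
theorem stmt_14
    {M M' : Type} [AddCommGroup M] [Module L M] [AddCommGroup M'] [Module L M']
    (h : Dsub M ≃ₗ[L] Dsub M')
    (A : Set M) (hA : IsCR M A) (h0A : (0 : M) ∈ A)
    (A' : Set M') (hA' : IsCR M' A')
    (g : M → M') (hg : Set.BijOn g (Os A) (Os A')) (hgA : g '' A = A')
    (hg1 : ∀ α ∈ A, (1 - sL * tL) • g α = (h ⟨(1 - sL * tL) • α, ⟨α, rfl⟩⟩ : M'))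
    (hg2 : ∀ α ∈ A, ∀ ω (hω : ω ∈ Dsub M), sL • α + ω ∈ Os A →
      g (sL • α + ω) = sL • g α + (h ⟨ω, hω⟩ : M'))
    (f : M → M')
    (hf : ∀ α ∈ A, ∀ ω (hω : ω ∈ Dsub M), f (α + ω) = g α + (h ⟨ω, hω⟩ : M')) :
    (∀ x y : M, f (tL • x + (1 - sL * tL) • y) = tL • f x + (1 - sL * tL) • f y) ∧
    Function.Bijective f ∧ IsBqHom f := by
  classical
  -- basic membership facts
  have dmem : ∀ m : M, (1 - sL * tL) • m ∈ Dsub M := fun m => ⟨m, rfl⟩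
  have hAsub : ∀ a ∈ A, a ∈ Os A := fun a ha => ⟨0, a, ha, by simp⟩
  -- coercion lemmas for h
  have Hadd : ∀ (ω₁ ω₂ : M) (h1 : ω₁ ∈ Dsub M) (h2 : ω₂ ∈ Dsub M) (h12 : ω₁ + ω₂ ∈ Dsub M),
      (h ⟨ω₁ + ω₂, h12⟩ : M') = (h ⟨ω₁, h1⟩ : M') + (h ⟨ω₂, h2⟩ : M') := by
    intro ω₁ ω₂ h1 h2 h12
    have e : (⟨ω₁ + ω₂, h12⟩ : Dsub M) = ⟨ω₁, h1⟩ + ⟨ω₂, h2⟩ := rfl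
    rw [e, map_add]; rfl
  have Hsmul : ∀ (c : L) (ω : M) (h1 : ω ∈ Dsub M) (hc : c • ω ∈ Dsub M),
      (h ⟨c • ω, hc⟩ : M') = c • (h ⟨ω, h1⟩ : M') := by
    intro c ω h1 hc
    have e : (⟨c • ω, hc⟩ : Dsub M) = c • ⟨ω, h1⟩ := rfl
    rw [e, map_smul]; rfl
  have Hneg : ∀ (ω : M) (h1 : ω ∈ Dsub M) (hn : -ω ∈ Dsub M),
      (h ⟨-ω, hn⟩ : M') = -(h ⟨ω, h1⟩ : M') := by
    intro ω h1 hn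
    have e : (⟨-ω, hn⟩ : Dsub M) = -(⟨ω, h1⟩ : Dsub M) := rfl
    rw [e, map_neg]; rfl
  -- decomposition existence
  have hrep : ∀ x : M, ∃ a, a ∈ A ∧ x - a ∈ Dsub M := by
    intro x; obtain ⟨a, ha, -⟩ := hA x; exact ⟨a, ha⟩
  -- formula for f at any point
  have hfx : ∀ (x a : M), a ∈ A → ∀ (hxa : x - a ∈ Dsub M),
      f x = g a + (h ⟨x - a, hxa⟩ : M') := by
    intro x a ha hxa
    have e : a + (x - a) = x := by abel
    have := hf a ha (x - a) hxa
    rw [e] at this; exact this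
  -- key consequence of hg2 : relating g at two elements of A
  have hgG : ∀ a ∈ A, ∀ b ∈ A, ∀ (hd : b - sL • a ∈ Dsub M),
      g b = sL • g a + (h ⟨b - sL • a, hd⟩ : M') := by
    intro a ha b hb hd
    have e : sL • a + (b - sL • a) = b := by abel
    have := hg2 a ha (b - sL • a) hd (by rw [e]; exact hAsub b hb)
    rw [e] at this; exact this
  -- f respects translation by elements of D
  have hD : ∀ (x ω : M) (hω : ω ∈ Dsub M), f (x + ω) = f x + (h ⟨ω, hω⟩ : M') := by
    intro x ω hω
    obtain ⟨a, ha, hxa⟩ := hrep x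
    have e2 : (x + ω) - a = (x - a) + ω := by abel
    have hsum : (x + ω) - a ∈ Dsub M := by rw [e2]; exact add_mem hxa hω
    rw [hfx (x + ω) a ha hsum, hfx x a ha hxa]
    have e3 : (⟨(x + ω) - a, hsum⟩ : Dsub M) = ⟨(x - a) + ω, add_mem hxa hω⟩ := Subtype.ext e2
    rw [e3, Hadd (x - a) ω hxa hω]
    abel
  -- h of (1-st)x equals (1-st) f x
  have hDD : ∀ (x : M) (hm : (1 - sL * tL) • x ∈ Dsub M),
      (h ⟨(1 - sL * tL) • x, hm⟩ : M') = (1 - sL * tL) • f x := by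
    intro x hm
    obtain ⟨a, ha, hxa⟩ := hrep x
    have e : (1 - sL * tL) • x = (1 - sL * tL) • a + (1 - sL * tL) • (x - a) := by
      rw [← smul_add]; congr 1; abel
    have hm2 : (1 - sL * tL) • a + (1 - sL * tL) • (x - a) ∈ Dsub M := e ▸ hm
    have e4 : (⟨(1 - sL * tL) • x, hm⟩ : Dsub M)
        = ⟨(1 - sL * tL) • a + (1 - sL * tL) • (x - a), hm2⟩ := Subtype.ext e
    rw [e4, Hadd _ _ (dmem a) (Submodule.smul_mem _ _ hxa) hm2,
      Hsmul _ _ hxa (Submodule.smul_mem _ _ hxa), ← hg1 a ha,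
      hfx x a ha hxa, smul_add]
  -- f commutes with s
  have hS : ∀ x : M, f (sL • x) = sL • f x := by
    intro x
    obtain ⟨a, ha, hxa⟩ := hrep x
    obtain ⟨b, hb, hba⟩ := hrep (sL • a)
    have hbd : b - sL • a ∈ Dsub M := by
      have : b - sL • a = -(sL • a - b) := by abel
      rw [this]; exact neg_mem hba
    have hgb := hgG a ha b hb hbd
    -- decomposition of s • x
    have htail : (sL • a - b) + sL • (x - a) ∈ Dsub M :=
      add_mem hba (Submodule.smul_mem _ _ hxa)
    have e : sL • x - b = (sL • a - b) + sL • (x - a) := by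
      rw [smul_sub]; abel
    have hsx : sL • x - b ∈ Dsub M := by rw [e]; exact htail
    rw [hfx (sL • x) b hb hsx, hfx x a ha hxa, hgb]
    have e4 : (⟨sL • x - b, hsx⟩ : Dsub M) = ⟨(sL • a - b) + sL • (x - a), htail⟩ :=
      Subtype.ext e
    rw [e4, Hadd _ _ hba (Submodule.smul_mem _ _ hxa) htail,
      Hsmul sL _ hxa (Submodule.smul_mem _ _ hxa)]
    have e5 : (h ⟨b - sL • a, hbd⟩ : M') = -(h ⟨sL • a - b, hba⟩ : M') := by
      have e6 : (⟨b - sL • a, hbd⟩ : Dsub M) = ⟨-(sL • a - b), neg_mem hba⟩ :=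
        Subtype.ext (by show b - sL • a = -(sL • a - b); abel)
      rw [e6]; exact Hneg _ hba (neg_mem hba)
    rw [e5, smul_add]
    abel
  -- f commutes with s⁻¹
  have hSi : ∀ x : M, f (sLi • x) = sLi • f x := by
    intro x
    have e : sL • (sLi • x) = x := by rw [smul_smul, hssi, one_smul]
    have := hS (sLi • x)
    rw [e] at this
    calc f (sLi • x) = (sLi * sL) • f (sLi • x) := by rw [hsis, one_smul]
      _ = sLi • (sL • f (sLi • x)) := by rw [mul_smul]
      _ = sLi • f x := by rw [← this]
  -- f commutes with t
  have hT : ∀ x : M, f (tL • x) = tL • f x := by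
    intro x
    have hmem : -(sLi • ((1 - sL * tL) • x)) ∈ Dsub M :=
      neg_mem (Submodule.smul_mem _ _ (dmem x))
    have e : tL • x = sLi • x + -(sLi • ((1 - sL * tL) • x)) := by
      rw [smul_smul, ← sub_eq_add_neg, ← sub_smul, eT]
    rw [e, hD _ _ hmem, hSi,
      Hneg _ (Submodule.smul_mem _ _ (dmem x)) hmem,
      Hsmul sLi _ (dmem x) (Submodule.smul_mem _ _ (dmem x)), hDD x (dmem x)]
    rw [smul_smul, ← sub_eq_add_neg, ← sub_smul, eT]
  -- membership and h-formula for (1 - s⁻¹t⁻¹) • y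
  have dmem' : ∀ m : M, (1 - sLi * tLi) • m ∈ Dsub M := by
    intro m
    rw [eDi, mul_smul]
    exact Submodule.smul_mem _ _ (dmem m)
  have hDD' : ∀ (x : M) (hm : (1 - sLi * tLi) • x ∈ Dsub M),
      (h ⟨(1 - sLi * tLi) • x, hm⟩ : M') = (1 - sLi * tLi) • f x := by
    intro x hm
    have e : (1 - sLi * tLi) • x = (-(sLi * tLi)) • ((1 - sL * tL) • x) := by
      rw [← mul_smul, ← eDi]
    have hm2 : (-(sLi * tLi)) • ((1 - sL * tL) • x) ∈ Dsub M := e ▸ hm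
    have e4 : (⟨(1 - sLi * tLi) • x, hm⟩ : Dsub M)
        = ⟨(-(sLi * tLi)) • ((1 - sL * tL) • x), hm2⟩ := Subtype.ext e
    rw [e4, Hsmul _ _ (dmem x) hm2, hDD x (dmem x), ← mul_smul, ← eDi]
  -- f commutes with t⁻¹
  have hTi : ∀ x : M, f (tLi • x) = tLi • f x := by
    intro x
    have hmem : -(sL • ((1 - sLi * tLi) • x)) ∈ Dsub M :=
      neg_mem (Submodule.smul_mem _ _ (dmem' x))
    have e : tLi • x = sL • x + -(sL • ((1 - sLi * tLi) • x)) := by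
      rw [smul_smul, ← sub_eq_add_neg, ← sub_smul, eTi]
    rw [e, hD _ _ hmem, hS,
      Hneg _ (Submodule.smul_mem _ _ (dmem' x)) hmem,
      Hsmul sL _ (dmem' x) (Submodule.smul_mem _ _ (dmem' x)), hDD' x (dmem' x)]
    rw [smul_smul, ← sub_eq_add_neg, ← sub_smul, eTi]
  -- the four biquandle operation identities
  have op1 : ∀ x y : M, f (tL • x + (1 - sL * tL) • y) = tL • f x + (1 - sL * tL) • f y := by
    intro x y
    rw [hD _ _ (dmem y), hT, hDD y (dmem y)]
  have op3 : ∀ x y : M, f (tLi • x + (1 - sLi * tLi) • y) = tLi • f x + (1 - sLi * tLi) • f y := by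
    intro x y
    rw [hD _ _ (dmem' y), hTi, hDD' y (dmem' y)]
  -- uniqueness of representatives in A'
  have hA'uniq : ∀ b₁ ∈ A', ∀ b₂ ∈ A', b₁ - b₂ ∈ Dsub M' → b₁ = b₂ := by
    intro b₁ h1 b₂ h2 h12
    obtain ⟨a, -, hu⟩ := hA' b₁
    have e1 : b₁ = a := hu b₁ ⟨h1, by rw [sub_self]; exact zero_mem _⟩
    have e2 : b₂ = a := hu b₂ ⟨h2, h12⟩
    rw [e1, e2]
  -- g is injective on A
  have ginjA : ∀ a ∈ A, ∀ b ∈ A, g a = g b → a = b := by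
    intro a ha b hb hab
    exact hg.injOn (hAsub a ha) (hAsub b hb) hab
  have hgA' : ∀ a ∈ A, g a ∈ A' := by
    intro a ha; rw [← hgA]; exact ⟨a, ha, rfl⟩
  -- injectivity of f
  have finj : Function.Injective f := by
    intro x y hxy
    obtain ⟨a, ha, hxa⟩ := hrep x
    obtain ⟨b, hb, hyb⟩ := hrep y
    rw [hfx x a ha hxa, hfx y b hb hyb] at hxy
    have hDab : g a - g b ∈ Dsub M' := by
      have e : g a - g b = (h ⟨y - b, hyb⟩ : M') - (h ⟨x - a, hxa⟩ : M') := by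
        have := hxy
        linear_combination (norm := abel) this
      rw [e]
      exact sub_mem (h ⟨y - b, hyb⟩).2 (h ⟨x - a, hxa⟩).2
    have hab : a = b := ginjA a ha b hb (hA'uniq _ (hgA' a ha) _ (hgA' b hb) hDab)
    subst hab
    have hval : (h ⟨x - a, hxa⟩ : M') = (h ⟨y - a, hyb⟩ : M') := by
      have := hxy
      linear_combination (norm := abel) this
    have := h.injective (Subtype.ext hval)
    have e2 : x - a = y - a := congrArg Subtype.val this
    have : x - a + a = y - a + a := by rw [e2]
    simpa [sub_add_cancel] using this
  -- surjectivity of f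
  have fsurj : Function.Surjective f := by
    intro y'
    obtain ⟨b', hb', -⟩ := hA' y'
    obtain ⟨hb'A, hb'D⟩ := hb'
    rw [← hgA] at hb'A
    obtain ⟨a, ha, rfl⟩ := hb'A
    refine ⟨a + ((h.symm ⟨y' - g a, hb'D⟩ : Dsub M) : M), ?_⟩
    rw [hf a ha _ (h.symm ⟨y' - g a, hb'D⟩).2]
    have : (h ⟨((h.symm ⟨y' - g a, hb'D⟩ : Dsub M) : M), (h.symm ⟨y' - g a, hb'D⟩).2⟩ : M')
        = y' - g a := by
      have e : (⟨((h.symm ⟨y' - g a, hb'D⟩ : Dsub M) : M), (h.symm ⟨y' - g a, hb'D⟩).2⟩ : Dsub M)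
          = h.symm ⟨y' - g a, hb'D⟩ := rfl
      rw [e, h.apply_symm_apply]
    rw [this]; abel
  exact ⟨op1, ⟨finj, fsurj⟩, op1, hS, op3, hSi⟩
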